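/- The operator M_Q(A) = (1/3)A + Q·A − A:M_Q^{(4)} on 3×3 matrices is self-adjoint with respect to the Frobenius inner product (M_Q(A):B = M_Q(B):A) and positive semidefinite (M_Q(A):A ≥ 0) for any Q ∈ Q_phy. -/
import Mathlib


open MeasureTheory

noncomputable def sphereMeasure :
    Measure (Metric.sphere (0 : EuclideanSpace ℝ (Fin 3)) 1) :=
  (volume : Measure (EuclideanSpace ℝ (Fin 3))).toSphere

noncomputable def quadForm (B : Matrix (Fin 3) (Fin 3) ℝ)
    (m : EuclideanSpace ℝ (Fin 3)) : ℝ :=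
  ∑ i, ∑ j, B i j * m i * m j

/-- The Bingham probability density on the sphere associated with `B`. -/
noncomputable def binghamDensity (B : Matrix (Fin 3) (Fin 3) ℝ)
    (m : EuclideanSpace ℝ (Fin 3)) : ℝ :=
  Real.exp (quadForm B m) /
    ∫ m' : Metric.sphere (0 : EuclideanSpace ℝ (Fin 3)) 1,
      Real.exp (quadForm B m') ∂sphereMeasure

/-- Fourth moment `M^{(4)}_{ijkl} = ∫ m_i m_j m_k m_l f_B dm` of the Bingham
distribution with field `B`. -/
noncomputable def M4 (B : Matrix (Fin 3) (Fin 3) ℝ) (i j k l : Fin 3) : ℝ :=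
  ∫ m : Metric.sphere (0 : EuclideanSpace ℝ (Fin 3)) 1,
    (m : EuclideanSpace ℝ (Fin 3)) i * (m : EuclideanSpace ℝ (Fin 3)) j *
    (m : EuclideanSpace ℝ (Fin 3)) k * (m : EuclideanSpace ℝ (Fin 3)) l *
    binghamDensity B m ∂sphereMeasure

/-- Frobenius inner product of 3×3 matrices. -/
def frob (A B : Matrix (Fin 3) (Fin 3) ℝ) : ℝ := ∑ i, ∑ j, A i j * B i j

/-- The operator `M_Q(A) = (1/3)A + Q·A − A:M_Q^{(4)}` on 3×3 matrices. -/
noncomputable def MQop (Q Bbar A : Matrix (Fin 3) (Fin 3) ℝ) :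
    Matrix (Fin 3) (Fin 3) ℝ :=
  (1 / 3 : ℝ) • A + Q * A - Matrix.of fun i j => ∑ k, ∑ l, M4 Bbar i j k l * A k l

-- ===== auxiliary lemmas =====

instance : IsFiniteMeasure sphereMeasure := by
  unfold sphereMeasure; infer_instance

lemma coord_cont (i : Fin 3) :
    Continuous (fun m : Metric.sphere (0 : EuclideanSpace ℝ (Fin 3)) 1 =>
      (m : EuclideanSpace ℝ (Fin 3)) i) :=
  (EuclideanSpace.proj i).continuous.comp continuous_subtype_val

lemma quad_cont (B : Matrix (Fin 3) (Fin 3) ℝ) :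
    Continuous (fun m : Metric.sphere (0 : EuclideanSpace ℝ (Fin 3)) 1 =>
      quadForm B (m : EuclideanSpace ℝ (Fin 3))) := by
  unfold quadForm
  exact continuous_finset_sum _ fun i _ => continuous_finset_sum _ fun j _ =>
    (continuous_const.mul (coord_cont i)).mul (coord_cont j)

lemma density_cont (B : Matrix (Fin 3) (Fin 3) ℝ) :
    Continuous (fun m : Metric.sphere (0 : EuclideanSpace ℝ (Fin 3)) 1 =>
      binghamDensity B (m : EuclideanSpace ℝ (Fin 3))) := by
  unfold binghamDensity
  exact (Real.continuous_exp.comp (quad_cont B)).div_const _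

lemma density_nonneg (B : Matrix (Fin 3) (Fin 3) ℝ) (m : EuclideanSpace ℝ (Fin 3)) :
    0 ≤ binghamDensity B m :=
  div_nonneg (Real.exp_pos _).le (integral_nonneg fun _ => (Real.exp_pos _).le)

lemma cont_integrable (φ : Metric.sphere (0 : EuclideanSpace ℝ (Fin 3)) 1 → ℝ)
    (hφ : Continuous φ) : Integrable φ sphereMeasure :=
  hφ.integrable_of_hasCompactSupport (HasCompactSupport.of_compactSpace φ)

lemma sphere_sum_sq (m : Metric.sphere (0 : EuclideanSpace ℝ (Fin 3)) 1) :
    ∑ j, ((m : EuclideanSpace ℝ (Fin 3)) j)^2 = 1 := by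
  have h : ‖(m : EuclideanSpace ℝ (Fin 3))‖ = 1 := norm_eq_of_mem_sphere m
  rw [EuclideanSpace.norm_eq] at h
  have h2 : ∑ j, ((m : EuclideanSpace ℝ (Fin 3)) j)^2 =
      Real.sqrt (∑ j, ‖(m : EuclideanSpace ℝ (Fin 3)) j‖^2) ^ 2 := by
    rw [Real.sq_sqrt]
    · simp [Real.norm_eq_abs, sq_abs]
    · positivity
  rw [h2, h]; norm_num

lemma four_sum_comm (F : Fin 3 → Fin 3 → Fin 3 → Fin 3 → ℝ) :
    (∑ i, ∑ j, ∑ k, ∑ l, F i j k l) = ∑ k, ∑ l, ∑ i, ∑ j, F i j k l := by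
  calc (∑ i, ∑ j, ∑ k, ∑ l, F i j k l)
      = ∑ i, ∑ k, ∑ j, ∑ l, F i j k l :=
        Finset.sum_congr rfl fun i _ => Finset.sum_comm
    _ = ∑ k, ∑ i, ∑ j, ∑ l, F i j k l := Finset.sum_comm
    _ = ∑ k, ∑ i, ∑ l, ∑ j, F i j k l :=
        Finset.sum_congr rfl fun k _ => Finset.sum_congr rfl fun i _ =>
          Finset.sum_comm
    _ = ∑ k, ∑ l, ∑ i, ∑ j, F i j k l :=
        Finset.sum_congr rfl fun k _ => Finset.sum_comm

set_option maxHeartbeats 2000000 in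
/-- For `Q ∈ Q_phy` with Bingham field `B_Q`, the operator `M_Q` is self-adjoint
for the Frobenius inner product and positive semidefinite. -/
theorem MQop_selfAdjoint_nonneg (Q Bbar : Matrix (Fin 3) (Fin 3) ℝ)
    (hB : Bbar.IsSymm) (hBtr : Bbar.trace = 0)
    (hQ : Q.IsHermitian) (hQtr : Q.trace = 0)
    (heig : ∀ i, hQ.eigenvalues i ∈ Set.Ioo (-(1 / 3) : ℝ) (2 / 3))
    (hmom : ∀ i j, (∫ m : Metric.sphere (0 : EuclideanSpace ℝ (Fin 3)) 1,
        ((m : EuclideanSpace ℝ (Fin 3)) i * (m : EuclideanSpace ℝ (Fin 3)) j -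
          if i = j then (1 : ℝ) / 3 else 0) * binghamDensity Bbar m ∂sphereMeasure)
        = Q i j) :
    ∀ A B : Matrix (Fin 3) (Fin 3) ℝ,
      frob (MQop Q Bbar A) B = frob (MQop Q Bbar B) A ∧
      0 ≤ frob (MQop Q Bbar A) A := by
  have hQs : ∀ i j, Q i j = Q j i := by
    intro i j
    have := congrFun (congrFun hQ j) i
    simpa [Matrix.conjTranspose_apply] using this
  have hM4s : ∀ i j k l, M4 Bbar i j k l = M4 Bbar k l i j := by
    intro i j k l
    unfold M4
    congr 1
    funext m
    ring
  have hsplit : ∀ A B : Matrix (Fin 3) (Fin 3) ℝ,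
      frob (MQop Q Bbar A) B = 1/3 * frob A B + frob (Q*A) B
        - (∑ i, ∑ j, (∑ k, ∑ l, M4 Bbar i j k l * A k l) * B i j) := by
    intro A B
    simp only [MQop, frob, Matrix.sub_apply, Matrix.add_apply, Matrix.smul_apply,
      Matrix.of_apply, Matrix.mul_apply, smul_eq_mul, Fin.sum_univ_three]
    ring
  intro A B
  constructor
  · -- self-adjointness
    rw [hsplit A B, hsplit B A]
    have e1 : frob A B = frob B A := by
      simp only [frob, Fin.sum_univ_three]; ring
    have e2 : frob (Q*A) B = frob (Q*B) A := by
      simp only [frob, Matrix.mul_apply, Fin.sum_univ_three,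
        hQs 1 0, hQs 2 0, hQs 2 1]
      ring
    have e3 : (∑ i, ∑ j, (∑ k, ∑ l, M4 Bbar i j k l * A k l) * B i j)
        = ∑ i, ∑ j, (∑ k, ∑ l, M4 Bbar i j k l * B k l) * A i j := by
      calc (∑ i, ∑ j, (∑ k, ∑ l, M4 Bbar i j k l * A k l) * B i j)
          = ∑ i, ∑ j, ∑ k, ∑ l, M4 Bbar i j k l * A k l * B i j := by
            simp only [Finset.sum_mul]
        _ = ∑ k, ∑ l, ∑ i, ∑ j, M4 Bbar i j k l * A k l * B i j :=
            four_sum_comm _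
        _ = ∑ k, ∑ l, ∑ i, ∑ j, M4 Bbar k l i j * B i j * A k l := by
            refine Finset.sum_congr rfl fun k _ => Finset.sum_congr rfl fun l _ =>
              Finset.sum_congr rfl fun i _ => Finset.sum_congr rfl fun j _ => ?_
            rw [← hM4s]; ring
        _ = ∑ i, ∑ j, (∑ k, ∑ l, M4 Bbar i j k l * B k l) * A i j := by
            simp only [Finset.sum_mul]
    rw [e1, e2, e3]
  ·
    -- positivity
    have hc0 : 0 ≤ frob A A :=
      Finset.sum_nonneg fun i _ => Finset.sum_nonneg fun j _ => mul_self_nonneg _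
    set Z := ∫ m' : Metric.sphere (0 : EuclideanSpace ℝ (Fin 3)) 1,
        Real.exp (quadForm Bbar m') ∂sphereMeasure with hZdef
    have hfe : ∀ m : Metric.sphere (0 : EuclideanSpace ℝ (Fin 3)) 1,
        binghamDensity Bbar m = Real.exp (quadForm Bbar m) / Z := fun _ => rfl
    -- the two integrand families
    set G : Fin 3 → Fin 3 → Metric.sphere (0 : EuclideanSpace ℝ (Fin 3)) 1 → ℝ :=
      fun i k m => (∑ j, A k j * A i j) *
        (((m : EuclideanSpace ℝ (Fin 3)) i * (m : EuclideanSpace ℝ (Fin 3)) k -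
          if i = k then (1:ℝ)/3 else 0) * binghamDensity Bbar m) with hGdef
    set H : Fin 3 → Fin 3 → Fin 3 → Fin 3 →
        Metric.sphere (0 : EuclideanSpace ℝ (Fin 3)) 1 → ℝ :=
      fun i j k l m => (m : EuclideanSpace ℝ (Fin 3)) i * (m : EuclideanSpace ℝ (Fin 3)) j *
        (m : EuclideanSpace ℝ (Fin 3)) k * (m : EuclideanSpace ℝ (Fin 3)) l *
        binghamDensity Bbar m * A k l * A i j with hHdef
    have hGint : ∀ i k, Integrable (G i k) sphereMeasure := fun i k =>
      cont_integrable _ (continuous_const.mul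
        ((((coord_cont i).mul (coord_cont k)).sub continuous_const).mul (density_cont Bbar)))
    have hHint : ∀ i j k l, Integrable (H i j k l) sphereMeasure := fun i j k l =>
      cont_integrable _
        (((((((coord_cont i).mul (coord_cont j)).mul (coord_cont k)).mul
          (coord_cont l)).mul (density_cont Bbar)).mul continuous_const).mul continuous_const)
    have hB2 : frob (Q*A) A = ∑ i, ∑ k, (∑ j, A k j * A i j) * Q i k := by
      simp only [frob, Matrix.mul_apply, Fin.sum_univ_three]; ring
    have hT1 : frob (Q*A) A = ∫ m, ∑ i, ∑ k, G i k m ∂sphereMeasure := by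
      rw [hB2]
      have hC : ∀ i k : Fin 3, (∑ j, A k j * A i j) * Q i k =
          ∫ m, G i k m ∂sphereMeasure := by
        intro i k
        rw [← hmom i k, ← integral_const_mul]
      calc (∑ i, ∑ k, (∑ j, A k j * A i j) * Q i k)
          = ∑ i, ∑ k, ∫ m, G i k m ∂sphereMeasure :=
            Finset.sum_congr rfl fun i _ => Finset.sum_congr rfl fun k _ => hC i k
        _ = ∑ i, ∫ m, ∑ k, G i k m ∂sphereMeasure :=
            Finset.sum_congr rfl fun i _ =>
              (integral_finset_sum _ fun k _ => hGint i k).symm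
        _ = ∫ m, ∑ i, ∑ k, G i k m ∂sphereMeasure :=
            (integral_finset_sum _ fun i _ =>
              integrable_finset_sum _ fun k _ => hGint i k).symm
    have hM1 : ∀ i j k l : Fin 3, M4 Bbar i j k l * A k l * A i j =
        ∫ m, H i j k l m ∂sphereMeasure := by
      intro i j k l
      unfold M4
      rw [← integral_mul_const, ← integral_mul_const]
    have hT2 : (∑ i, ∑ j, (∑ k, ∑ l, M4 Bbar i j k l * A k l) * A i j)
        = ∫ m, ∑ i, ∑ j, ∑ k, ∑ l, H i j k l m ∂sphereMeasure := by
      calc (∑ i, ∑ j, (∑ k, ∑ l, M4 Bbar i j k l * A k l) * A i j)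
          = ∑ i, ∑ j, ∑ k, ∑ l, M4 Bbar i j k l * A k l * A i j := by
            simp only [Finset.sum_mul]
        _ = ∑ i, ∑ j, ∑ k, ∑ l, ∫ m, H i j k l m ∂sphereMeasure := by
            refine Finset.sum_congr rfl fun i _ => Finset.sum_congr rfl fun j _ =>
              Finset.sum_congr rfl fun k _ => Finset.sum_congr rfl fun l _ => hM1 i j k l
        _ = ∫ m, ∑ i, ∑ j, ∑ k, ∑ l, H i j k l m ∂sphereMeasure := by
            symm
            calc (∫ m, ∑ i, ∑ j, ∑ k, ∑ l, H i j k l m ∂sphereMeasure)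
                = ∑ i, ∫ m, ∑ j, ∑ k, ∑ l, H i j k l m ∂sphereMeasure :=
                  integral_finset_sum _ fun i _ => integrable_finset_sum _ fun j _ =>
                    integrable_finset_sum _ fun k _ =>
                      integrable_finset_sum _ fun l _ => hHint i j k l
              _ = ∑ i, ∑ j, ∫ m, ∑ k, ∑ l, H i j k l m ∂sphereMeasure :=
                  Finset.sum_congr rfl fun i _ =>
                    integral_finset_sum _ fun j _ => integrable_finset_sum _ fun k _ =>
                      integrable_finset_sum _ fun l _ => hHint i j k l
              _ = ∑ i, ∑ j, ∑ k, ∫ m, ∑ l, H i j k l m ∂sphereMeasure :=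
                  Finset.sum_congr rfl fun i _ => Finset.sum_congr rfl fun j _ =>
                    integral_finset_sum _ fun k _ =>
                      integrable_finset_sum _ fun l _ => hHint i j k l
              _ = ∑ i, ∑ j, ∑ k, ∑ l, ∫ m, H i j k l m ∂sphereMeasure :=
                  Finset.sum_congr rfl fun i _ => Finset.sum_congr rfl fun j _ =>
                    Finset.sum_congr rfl fun k _ =>
                      integral_finset_sum _ fun l _ => hHint i j k l
    -- pointwise identity
    have hpt : ∀ m : Metric.sphere (0 : EuclideanSpace ℝ (Fin 3)) 1,
        (∑ i, ∑ k, G i k m) - (∑ i, ∑ j, ∑ k, ∑ l, H i j k l m) =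
        ((∑ j, (∑ i, A i j * (m : EuclideanSpace ℝ (Fin 3)) i)^2) -
          (∑ i, ∑ j, A i j * (m : EuclideanSpace ℝ (Fin 3)) i *
            (m : EuclideanSpace ℝ (Fin 3)) j)^2) * binghamDensity Bbar m
          - (frob A A / 3) * binghamDensity Bbar m := by
      intro m
      simp only [hGdef, hHdef, frob, Fin.sum_univ_three, Fin.reduceEq,
        if_true, if_false, reduceIte]
      ring
    have hgint : Integrable (fun m : Metric.sphere (0 : EuclideanSpace ℝ (Fin 3)) 1 =>
        ((∑ j, (∑ i, A i j * (m : EuclideanSpace ℝ (Fin 3)) i)^2) -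
          (∑ i, ∑ j, A i j * (m : EuclideanSpace ℝ (Fin 3)) i *
            (m : EuclideanSpace ℝ (Fin 3)) j)^2) * binghamDensity Bbar m) sphereMeasure := by
      refine cont_integrable _ (Continuous.mul ?_ (density_cont Bbar))
      refine Continuous.sub ?_ (Continuous.pow ?_ 2)
      · exact continuous_finset_sum _ fun j _ => Continuous.pow
          (continuous_finset_sum _ fun i _ => continuous_const.mul (coord_cont i)) 2
      · exact continuous_finset_sum _ fun i _ => continuous_finset_sum _ fun j _ =>
          (continuous_const.mul (coord_cont i)).mul (coord_cont j)
    have hdint : Integrable (fun m : Metric.sphere (0 : EuclideanSpace ℝ (Fin 3)) 1 =>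
        binghamDensity Bbar m) sphereMeasure := cont_integrable _ (density_cont Bbar)
    have key : frob (MQop Q Bbar A) A = frob A A / 3 +
        ((∫ m, ((∑ j, (∑ i, A i j * (m : EuclideanSpace ℝ (Fin 3)) i)^2) -
          (∑ i, ∑ j, A i j * (m : EuclideanSpace ℝ (Fin 3)) i *
            (m : EuclideanSpace ℝ (Fin 3)) j)^2) * binghamDensity Bbar m ∂sphereMeasure) -
          (frob A A / 3) * ∫ m, binghamDensity Bbar m ∂sphereMeasure) := by
      rw [hsplit A A, hT1, hT2, add_sub_assoc, ← integral_sub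
        (integrable_finset_sum _ fun i _ => integrable_finset_sum _ fun k _ => hGint i k)
        (integrable_finset_sum _ fun i _ => integrable_finset_sum _ fun j _ =>
          integrable_finset_sum _ fun k _ => integrable_finset_sum _ fun l _ => hHint i j k l)]
      have : (fun m : Metric.sphere (0 : EuclideanSpace ℝ (Fin 3)) 1 =>
          (∑ i, ∑ k, G i k m) - (∑ i, ∑ j, ∑ k, ∑ l, H i j k l m)) =
          fun m : Metric.sphere (0 : EuclideanSpace ℝ (Fin 3)) 1 => ((∑ j, (∑ i, A i j * (m : EuclideanSpace ℝ (Fin 3)) i)^2) -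
          (∑ i, ∑ j, A i j * (m : EuclideanSpace ℝ (Fin 3)) i *
            (m : EuclideanSpace ℝ (Fin 3)) j)^2) * binghamDensity Bbar m
          - (frob A A / 3) * binghamDensity Bbar m := by
        funext m; exact hpt m
      rw [this, integral_sub hgint (hdint.const_mul _), integral_const_mul]
      ring
    -- Cauchy–Schwarz pointwise bound
    have hg : ∀ m : Metric.sphere (0 : EuclideanSpace ℝ (Fin 3)) 1,
        0 ≤ (∑ j, (∑ i, A i j * (m : EuclideanSpace ℝ (Fin 3)) i)^2) -
          (∑ i, ∑ j, A i j * (m : EuclideanSpace ℝ (Fin 3)) i *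
            (m : EuclideanSpace ℝ (Fin 3)) j)^2 := by
      intro m
      have hcs := Finset.sum_mul_sq_le_sq_mul_sq Finset.univ
        (fun j => ∑ i, A i j * (m : EuclideanSpace ℝ (Fin 3)) i)
        (fun j => (m : EuclideanSpace ℝ (Fin 3)) j)
      rw [sphere_sum_sq m, mul_one] at hcs
      have hqe : (∑ i, ∑ j, A i j * (m : EuclideanSpace ℝ (Fin 3)) i *
          (m : EuclideanSpace ℝ (Fin 3)) j) =
          ∑ j, (∑ i, A i j * (m : EuclideanSpace ℝ (Fin 3)) i) *
            (m : EuclideanSpace ℝ (Fin 3)) j := by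
        simp only [Fin.sum_univ_three]; ring
      rw [hqe]
      simpa using hcs
    by_cases hz : Z = 0
    · have hfz : ∀ m : Metric.sphere (0 : EuclideanSpace ℝ (Fin 3)) 1,
          binghamDensity Bbar m = 0 := by
        intro m; rw [hfe m, hz, div_zero]
      rw [key]
      simp only [hfz, mul_zero, integral_zero]
      linarith
    · have hone : (∫ m, binghamDensity Bbar m ∂sphereMeasure) = 1 := by
        have : (fun m : Metric.sphere (0 : EuclideanSpace ℝ (Fin 3)) 1 =>
            binghamDensity Bbar m) =
            fun m : Metric.sphere (0 : EuclideanSpace ℝ (Fin 3)) 1 =>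
              Real.exp (quadForm Bbar m) / Z := by
          funext m; exact hfe m
        rw [this, integral_div, ← hZdef, div_self hz]
      rw [key, hone, mul_one]
      have : 0 ≤ ∫ m, ((∑ j, (∑ i, A i j * (m : EuclideanSpace ℝ (Fin 3)) i)^2) -
          (∑ i, ∑ j, A i j * (m : EuclideanSpace ℝ (Fin 3)) i *
            (m : EuclideanSpace ℝ (Fin 3)) j)^2) * binghamDensity Bbar m ∂sphereMeasure :=
        integral_nonneg fun m => mul_nonneg (hg m) (density_nonneg Bbar m)
      linarith
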